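/- arXiv:1304.4853 — 3 statements merged into one kernel-verified Lean document; each statement's English description precedes it below -/
import Mathlib

section
/- Let 𝒳 be an ordered vector space and ρ : 𝒳 → ℝ a convex functional that is inversely monotone (X ≤ Y implies ρ(Y) ≤ ρ(X)) and continuous from below (for every nondecreasing sequence Xₙ ↗ X in 𝒳 one has ρ(Xₙ) ↘ ρ(X)). Then ρ is continuous from above: for every nonincreasing sequence Xₙ ↘ X in 𝒳 one has ρ(Xₙ) ↗ ρ(X). -/
open Filter

/-- A convex, inversely monotone functional on an ordered vector space
which is continuous from below (along nondecreasing sequences with a supremum) is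
continuous from above (along nonincreasing sequences with an infimum). -/
theorem stmt1 {𝒳 : Type*} [AddCommGroup 𝒳] [PartialOrder 𝒳] [IsOrderedAddMonoid 𝒳] [Module ℝ 𝒳]
    (ρ : 𝒳 → ℝ)
    -- convexity
    (hconv : ∀ X Y : 𝒳, ∀ l : ℝ, l ∈ Set.Icc (0:ℝ) 1 →
      ρ (l • X + (1 - l) • Y) ≤ l * ρ X + (1 - l) * ρ Y)
    -- inverse monotonicity
    (hmono : ∀ X Y : 𝒳, X ≤ Y → ρ Y ≤ ρ X)
    -- continuity from below
    (hbelow : ∀ (Xn : ℕ → 𝒳) (X : 𝒳), Monotone Xn → IsLUB (Set.range Xn) X →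
      Tendsto (fun n => ρ (Xn n)) atTop (nhds (ρ X))) :
    -- continuity from above
    ∀ (Xn : ℕ → 𝒳) (X : 𝒳), Antitone Xn → IsGLB (Set.range Xn) X →
      Tendsto (fun n => ρ (Xn n)) atTop (nhds (ρ X)) := by
  intro Xn X hanti hglb
  set Yn : ℕ → 𝒳 := fun n => X + X - Xn n with hYn
  -- Yn is monotone
  have hYmono : Monotone Yn := fun m n hmn =>
    sub_le_sub_left (hanti hmn) (X + X)
  -- X is the LUB of Yn
  have hlub : IsLUB (Set.range Yn) X := by
    constructor
    · rintro y ⟨n, rfl⟩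
      have hXle : X ≤ Xn n := hglb.1 ⟨n, rfl⟩
      show X + X - Xn n ≤ X
      calc X + X - Xn n ≤ X + X - X := sub_le_sub_left hXle _
        _ = X := by abel
    · intro b hb
      have hlow : X + X - b ∈ lowerBounds (Set.range Xn) := by
        rintro x ⟨n, rfl⟩
        have h : X + X - Xn n ≤ b := hb ⟨n, rfl⟩
        exact sub_le_comm.mp h
      have h2 : X + X - b ≤ X := hglb.2 hlow
      have : X + X ≤ X + b := sub_le_iff_le_add.mp h2
      exact le_of_add_le_add_left this
  have hY : Tendsto (fun n => ρ (Yn n)) atTop (nhds (ρ X)) :=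
    hbelow Yn X hYmono hlub
  -- key identity: (1/2) • Xn n + (1/2) • Yn n = X
  have hid : ∀ n, (1/2 : ℝ) • Xn n + (1 - 1/2 : ℝ) • Yn n = X := by
    intro n
    have : (1 - 1/2 : ℝ) = (1/2 : ℝ) := by norm_num
    rw [this, ← smul_add]
    have hsum : Xn n + Yn n = X + X := by simp [hYn]
    rw [hsum, ← two_smul ℝ X, smul_smul]
    norm_num
  -- lower bound: 2 ρ X - ρ (Yn n) ≤ ρ (Xn n)
  have hlb : ∀ n, 2 * ρ X - ρ (Yn n) ≤ ρ (Xn n) := by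
    intro n
    have h := hconv (Xn n) (Yn n) (1/2) (by norm_num)
    rw [hid n] at h
    linarith
  have hub : ∀ n, ρ (Xn n) ≤ ρ X := fun n => hmono X (Xn n) (hglb.1 ⟨n, rfl⟩)
  have hL : Tendsto (fun n => 2 * ρ X - ρ (Yn n)) atTop (nhds (2 * ρ X - ρ X)) :=
    tendsto_const_nhds.sub hY
  rw [show 2 * ρ X - ρ X = ρ X by ring] at hL
  exact tendsto_of_tendsto_of_tendsto_of_le_of_le hL tendsto_const_nhds hlb hub
end

section
/- If a monetary convex risk measure for processes ρ on R∞ is cash additive at all times t ∈ [0,T] and admits a robust representation via penalized optional measures, then ρ reduces to a convex risk measure on bounded F_T-measurable random variables: ρ(X) = sup over probability measures Q ≪ P of (E_Q[−X_T] − γ̃(Q)) for some penalty function γ̃, i.e., ρ(X) depends on X only through its terminal value X_T. -/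
open MeasureTheory Set Filter

noncomputable section

/-- The (deterministic) step process `1_{[t,T]}`. -/
def stepProc (t T : ℝ) : ℝ → ℝ := Set.indicator (Set.Icc t T) 1

/-- Membership in `R∞`: bounded, adapted, càdlàg (on `[0,T]`) processes. -/
def MemRInf {Ω : Type*} {m : MeasurableSpace Ω} (ℱ : MeasureTheory.Filtration ℝ m)
    (T : ℝ) (X : ℝ → Ω → ℝ) : Prop :=
  MeasureTheory.Adapted ℱ X ∧
  (∃ C : ℝ, ∀ s ω, |X s ω| ≤ C) ∧
  (∀ ω, ∀ s ∈ Set.Ico (0:ℝ) T, ContinuousWithinAt (fun u => X u ω) (Set.Icc s T) s) ∧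
  (∀ ω, ∀ s ∈ Set.Ioc (0:ℝ) T, ∃ l : ℝ,
    Tendsto (fun u => X u ω) (nhdsWithin s (Set.Ico 0 s)) (nhds l))

/-- `α : Ω → Measure ℝ` is a normalized optional measure on `[0,T]`. -/
def MemZOne {Ω : Type*} {m : MeasurableSpace Ω} (ℱ : MeasureTheory.Filtration ℝ m)
    (P : Measure Ω) (T : ℝ) (α : Ω → Measure ℝ) : Prop :=
  (∀ ω, IsFiniteMeasure (α ω)) ∧
  (∀ ω, α ω (Set.Icc 0 T)ᶜ = 0) ∧
  (∀ t : ℝ, Measurable[ℱ t] fun ω => ((α ω) (Set.Icc 0 t)).toReal) ∧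
  (∫ ω, ((α ω) (Set.Icc 0 T)).toReal ∂P) = 1

lemma mem0 {Ω : Type*} {mΩ : MeasurableSpace Ω} (ℱ : MeasureTheory.Filtration ℝ mΩ) (T : ℝ) :
    MemRInf ℱ T (fun _ _ => 0) :=
  ⟨fun _ => measurable_const, ⟨0, by simp⟩, fun _ _ _ => continuousWithinAt_const,
    fun _ _ _ => ⟨0, tendsto_const_nhds⟩⟩

lemma stepProc_of_mem {t T u : ℝ} (h : u ∈ Icc t T) : stepProc t T u = 1 := by
  rw [stepProc, Set.indicator_of_mem h]; rfl

lemma stepProc_of_not_mem {t T u : ℝ} (h : u ∉ Icc t T) : stepProc t T u = 0 := by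
  rw [stepProc, Set.indicator_of_notMem h]

lemma stepProc_mem {Ω : Type*} {mΩ : MeasurableSpace Ω} (ℱ : MeasureTheory.Filtration ℝ mΩ)
    {t T : ℝ} (ht0 : 0 ≤ t) (c : ℝ) :
    MemRInf ℱ T (fun u (_ : Ω) => c * stepProc t T u) := by
  refine ⟨fun _ => measurable_const, ⟨|c|, ?_⟩, ?_, ?_⟩
  · intro s ω
    have hb : |stepProc t T s| ≤ 1 := by
      by_cases hs : s ∈ Icc t T
      · simp [stepProc_of_mem hs]
      · simp [stepProc_of_not_mem hs]
    calc |c * stepProc t T s| = |c| * |stepProc t T s| := abs_mul _ _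
      _ ≤ |c| * 1 := mul_le_mul_of_nonneg_left hb (abs_nonneg c)
      _ = |c| := mul_one _
  · intro ω s hs
    have hstep : ContinuousWithinAt (stepProc t T) (Icc s T) s := by
      rcases le_or_gt t s with h | h
      · have h1 : stepProc t T s = 1 := stepProc_of_mem ⟨h, hs.2.le⟩
        have hev : ∀ᶠ u in nhdsWithin s (Icc s T), (1:ℝ) = stepProc t T u := by
          filter_upwards [self_mem_nhdsWithin] with u hu
          exact (stepProc_of_mem ⟨le_trans h hu.1, hu.2⟩).symm
        unfold ContinuousWithinAt
        rw [h1]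
        exact Tendsto.congr' hev tendsto_const_nhds
      · have h1 : stepProc t T s = 0 := by
          exact stepProc_of_not_mem (fun hm => absurd hm.1 (not_le.mpr h))
        have hev : ∀ᶠ u in nhdsWithin s (Icc s T), (0:ℝ) = stepProc t T u := by
          filter_upwards [mem_nhdsWithin_of_mem_nhds (eventually_lt_nhds h)] with u hu
          exact (stepProc_of_not_mem (fun hm => absurd hm.1 (not_le.mpr hu))).symm
        unfold ContinuousWithinAt
        rw [h1]
        exact Tendsto.congr' hev tendsto_const_nhds
    exact (continuousWithinAt_const.mul hstep : _)
  · intro ω s hs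
    rcases le_or_gt s t with h | h
    · refine ⟨0, ?_⟩
      have hev : ∀ᶠ u in nhdsWithin s (Ico 0 s), (0:ℝ) = c * stepProc t T u := by
        filter_upwards [self_mem_nhdsWithin] with u hu
        have : u ∉ Icc t T := fun hm => absurd hm.1 (not_le.mpr (lt_of_lt_of_le hu.2 h))
        simp [stepProc_of_not_mem this]
      exact Tendsto.congr' hev tendsto_const_nhds
    · refine ⟨c, ?_⟩
      have hev : ∀ᶠ u in nhdsWithin s (Ico 0 s), c = c * stepProc t T u := by
        filter_upwards [self_mem_nhdsWithin,
          mem_nhdsWithin_of_mem_nhds (eventually_gt_nhds h)] with u hu ht'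
        have : u ∈ Icc t T := ⟨ht'.le, le_trans hu.2.le hs.2⟩
        simp [stepProc_of_mem this]
      exact Tendsto.congr' hev tendsto_const_nhds

lemma inner_step (μ : Measure ℝ) {t T : ℝ} (ht0 : 0 ≤ t) (c : ℝ) :
    (∫ s in Icc 0 T, -(c * stepProc t T s) ∂μ) = (-c) * (μ (Icc t T)).toReal := by
  have h : (fun s => -(c * stepProc t T s)) = (Icc t T).indicator (fun _ => -c) := by
    funext s
    by_cases hs : s ∈ Icc t T
    · simp [stepProc_of_mem hs, Set.indicator_of_mem hs]
    · simp [stepProc_of_not_mem hs, Set.indicator_of_notMem hs]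
  rw [h, setIntegral_indicator measurableSet_Icc, setIntegral_const, Icc_inter_Icc,
    max_eq_right ht0, min_self, smul_eq_mul, mul_comm]; rfl

/-- If a monetary convex risk measure for processes `ρ` on `R∞` is cash
additive at all times `t ∈ [0,T]` and admits a robust representation via penalized optional
measures, then `ρ` reduces to a convex risk measure on bounded `F_T`-measurable random
variables: `ρ(X) = sup_Q (E_Q[−X_T] − γ̃(Q))` over probability measures `Q ≪ P`, and in
particular `ρ(X)` depends on `X` only through its terminal value `X_T`. -/
theorem stmt12 {Ω : Type*} {mΩ : MeasurableSpace Ω} (ℱ : MeasureTheory.Filtration ℝ mΩ)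
    (P : Measure Ω) [IsProbabilityMeasure P]
    (T : ℝ) (hT : 0 < T)
    (ρ : (ℝ → Ω → ℝ) → ℝ)
    -- monetary convex risk measure axioms
    (hcash : ∀ X, MemRInf ℱ T X → ∀ c : ℝ,
      ρ (fun u ω => X u ω + c * stepProc 0 T u) = ρ X - c)
    (hmono : ∀ X Y, MemRInf ℱ T X → MemRInf ℱ T Y →
      (∀ u ∈ Set.Icc (0:ℝ) T, ∀ ω, X u ω ≤ Y u ω) → ρ Y ≤ ρ X)
    (hconv : ∀ X Y, MemRInf ℱ T X → MemRInf ℱ T Y → ∀ l ∈ Set.Icc (0:ℝ) 1,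
      ρ (fun u ω => l * X u ω + (1 - l) * Y u ω) ≤ l * ρ X + (1 - l) * ρ Y)
    (hnorm : ρ (fun _ _ => 0) = 0)
    -- full cash additivity
    (hca : ∀ t ∈ Set.Icc (0:ℝ) T, ∀ X, MemRInf ℱ T X → ∀ c : ℝ,
      ρ (fun u ω => X u ω + c * stepProc t T u) = ρ X - c)
    -- robust representation via penalized optional measures
    {ι : Type} [Nonempty ι]
    (α : ι → Ω → Measure ℝ) (hα : ∀ i, MemZOne ℱ P T (α i))
    (γ : ι → ℝ) (hγpos : ∀ i, 0 ≤ γ i)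
    (hγinf : ∀ ε : ℝ, 0 < ε → ∃ i, γ i < ε)
    (hrep : ∀ X, MemRInf ℱ T X →
      ρ X = ⨆ i : ι, ((∫ ω, (∫ t in Set.Icc 0 T, (-(X t ω)) ∂(α i ω)) ∂P) - γ i)) :
    ∃ (κ : Type) (_ : Nonempty κ) (Q : κ → Measure Ω) (γ' : κ → ℝ),
      (∀ j, IsProbabilityMeasure (Q j)) ∧
      (∀ j, Q j ≪ P) ∧
      (∀ j, 0 ≤ γ' j) ∧
      (∀ X, MemRInf ℱ T X → ρ X = ⨆ j : κ, ((∫ ω, -(X T ω) ∂(Q j)) - γ' j)) ∧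
      (∀ X Y, MemRInf ℱ T X → MemRInf ℱ T Y → (∀ ω, X T ω = Y T ω) → ρ X = ρ Y) := by
  classical
  have hfin : ∀ i ω, IsFiniteMeasure (α i ω) := fun i => (hα i).1
  set L : ι → Ω → ℝ := fun i ω => ((α i ω) (Icc 0 T)).toReal with hLdef
  have hLmeas : ∀ i, Measurable (L i) := fun i => ((hα i).2.2.1 T).mono (ℱ.le T) le_rfl
  have hLint1 : ∀ i, ∫ ω, L i ω ∂P = 1 := fun i => (hα i).2.2.2
  have hLnn : ∀ i ω, 0 ≤ L i ω := fun _ _ => ENNReal.toReal_nonneg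
  have hLint : ∀ i, Integrable (L i) P := by
    intro i
    by_contra h
    have h1 := hLint1 i
    rw [integral_undef h] at h1
    norm_num at h1
  -- step 1 : for every t ∈ [0,T), a.e. ω, α i ω (Ico 0 t) = 0
  have hm0 : ∀ i, ∀ t, 0 ≤ t → t < T → ∀ᵐ ω ∂P, α i ω (Ico 0 t) = 0 := by
    intro i t ht0 htT
    -- the supremum identity for every c
    have hstep : ∀ c : ℝ, (-c : ℝ)
        = ⨆ j, ((-c) * ∫ ω, ((α j ω) (Icc t T)).toReal ∂P - γ j) := by
      intro c
      have hmem := stepProc_mem ℱ (Ω := Ω) (T := T) ht0 c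
      have h1 : ρ (fun u (_ : Ω) => c * stepProc t T u) = -c := by
        have h := hca t ⟨ht0, htT.le⟩ (fun _ _ => 0) (mem0 ℱ T) c
        rw [hnorm] at h
        rw [show (fun u (ω : Ω) => (fun (_:ℝ) (_:Ω) => (0:ℝ)) u ω + c * stepProc t T u)
            = fun u (_ : Ω) => c * stepProc t T u from by funext u ω; simp] at h
        rw [h]; ring
      have h2 : ρ (fun u (_ : Ω) => c * stepProc t T u)
          = ⨆ j, ((∫ ω, (∫ s in Icc 0 T, -(c * stepProc t T s) ∂(α j ω)) ∂P) - γ j) :=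
        hrep _ hmem
      rw [h1] at h2
      refine h2.trans (iSup_congr fun j => ?_)
      have h3 : ∀ ω, (∫ s in Icc 0 T, -(c * stepProc t T s) ∂(α j ω))
          = (-c) * ((α j ω) (Icc t T)).toReal := fun ω => inner_step (α j ω) ht0 c
      rw [integral_congr_ae (Eventually.of_forall h3), integral_const_mul]
    set m : ι → ℝ := fun j => ∫ ω, ((α j ω) (Icc t T)).toReal ∂P with hmdef
    have hsup : ∀ c : ℝ, c ≠ 0 → ∀ j, (-c) * m j - γ j ≤ -c := by
      intro c hc j
      have h2 := hstep c
      have hbdd : BddAbove (Set.range fun j => (-c) * m j - γ j) := by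
        by_contra hb
        rw [Real.iSup_of_not_bddAbove hb] at h2
        exact hc (by linarith)
      calc (-c) * m j - γ j ≤ ⨆ j, ((-c) * m j - γ j) := le_ciSup hbdd j
        _ = -c := h2.symm
    have hm1 : 1 ≤ m i := by
      by_contra hlt
      push_neg at hlt
      have hpos : 0 < 1 - m i := by linarith
      set c := (γ i + 1) / (1 - m i) with hc
      have hc0 : 0 < c := div_pos (by linarith [hγpos i]) hpos
      have h := hsup c (ne_of_gt hc0) i
      have hceq : c * (1 - m i) = γ i + 1 := div_mul_cancel₀ _ (ne_of_gt hpos)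
      nlinarith
    have hle : ∀ ω, ((α i ω) (Icc t T)).toReal ≤ L i ω := by
      intro ω
      haveI := hfin i ω
      exact ENNReal.toReal_mono (measure_ne_top _ _)
        (measure_mono (fun x hx => ⟨le_trans ht0 hx.1, hx.2⟩))
    have hmle : m i ≤ 1 := by
      rw [← hLint1 i]
      exact integral_mono_of_nonneg (Eventually.of_forall fun ω => ENNReal.toReal_nonneg)
        (hLint i) (Eventually.of_forall hle)
    have hmeq : m i = 1 := le_antisymm hmle hm1
    simp only [hmdef] at hmeq
    have hintf : Integrable (fun ω => ((α i ω) (Icc t T)).toReal) P := by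
      by_contra h
      rw [integral_undef h] at hmeq
      norm_num at hmeq
    have hdiffint : Integrable (fun ω => L i ω - ((α i ω) (Icc t T)).toReal) P :=
      (hLint i).sub hintf
    have hdiff0 : ∫ ω, (L i ω - ((α i ω) (Icc t T)).toReal) ∂P = 0 := by
      rw [integral_sub (hLint i) hintf, hLint1 i, hmeq]; ring
    have hae : (fun ω => L i ω - ((α i ω) (Icc t T)).toReal) =ᵐ[P] 0 :=
      (integral_eq_zero_iff_of_nonneg_ae
        (Eventually.of_forall fun ω => by
          have := hle ω; simp only [Pi.zero_apply]; linarith) hdiffint).mp hdiff0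
    filter_upwards [hae] with ω hω
    simp only [Pi.zero_apply] at hω
    haveI := hfin i ω
    have hLval : L i ω = ((α i ω) (Icc 0 T)).toReal := rfl
    have h1 : ((α i ω) (Icc t T)).toReal = ((α i ω) (Icc 0 T)).toReal := by
      rw [← hLval]; linarith
    have hms : α i ω (Icc 0 T) = α i ω (Icc t T) :=
      ((ENNReal.toReal_eq_toReal_iff' (measure_ne_top _ _) (measure_ne_top _ _)).mp h1).symm
    have hdisj : Disjoint (Ico (0:ℝ) t) (Icc t T) := by
      rw [Set.disjoint_left]
      intro x hx hx2
      exact absurd hx2.1 (not_le.mpr hx.2)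
    have hunion : α i ω (Ico 0 t) + α i ω (Icc t T) ≤ α i ω (Icc t T) := by
      rw [← measure_union hdisj measurableSet_Icc, ← hms]
      refine measure_mono ?_
      rintro x (hx | hx)
      · exact ⟨hx.1, le_trans hx.2.le htT.le⟩
      · exact ⟨le_trans ht0 hx.1, hx.2⟩
    by_contra ha
    have hb : α i ω (Icc t T) ≠ ⊤ := measure_ne_top _ _
    have hlt : α i ω (Icc t T) < α i ω (Ico 0 t) + α i ω (Icc t T) := by
      have := ENNReal.lt_add_right hb ha
      rwa [add_comm] at this
    exact absurd hunion (not_le.mpr hlt)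
  -- step 2 : a.e. ω, α i ω is concentrated on {T}
  have key : ∀ i, ∀ᵐ ω ∂P, (α i ω) ({(T:ℝ)}ᶜ) = 0 := by
    intro i
    have hseq : ∀ n : ℕ, ∀ᵐ ω ∂P, α i ω (Ico 0 (T - T / (n+1))) = 0 := by
      intro n
      have hn : (0:ℝ) < n + 1 := by positivity
      have h1 : T / (n+1) ≤ T := by
        rw [div_le_iff₀ hn]; nlinarith
      have h2 : (0:ℝ) < T / (n+1) := by positivity
      exact hm0 i _ (by linarith) (by linarith)
    filter_upwards [ae_all_iff.mpr hseq] with ω hω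
    have hU : Ico (0:ℝ) T = ⋃ n : ℕ, Ico 0 (T - T / (n+1)) := by
      ext x
      simp only [mem_Ico, mem_iUnion]
      constructor
      · rintro ⟨hx0, hxT⟩
        obtain ⟨n, hn⟩ := exists_nat_gt (T / (T - x))
        refine ⟨n, hx0, ?_⟩
        have hTx : 0 < T - x := by linarith
        have hn1 : (0:ℝ) < n + 1 := by positivity
        have ht1 : T / (T - x) < n + 1 := by
          calc T / (T - x) < n := hn
            _ ≤ n + 1 := by linarith
        have ht2 : T < (n + 1) * (T - x) := by
          rw [div_lt_iff₀ hTx] at ht1; linarith [mul_comm ((n:ℝ)+1) (T - x)]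
        have ht3 : T / (n+1) < T - x := by
          rw [div_lt_iff₀ hn1]; linarith [mul_comm ((n:ℝ)+1) (T - x)]
        linarith
      · rintro ⟨n, hx0, hx⟩
        have hn1 : (0:ℝ) < n + 1 := by positivity
        have : 0 < T / (n+1) := by positivity
        exact ⟨hx0, by linarith⟩
    have hIco : α i ω (Ico 0 T) = 0 := by
      rw [hU]
      exact measure_iUnion_null hω
    have hcomp := (hα i).2.1 ω
    have hsub : ({(T:ℝ)}ᶜ : Set ℝ) ⊆ Ico 0 T ∪ (Icc 0 T)ᶜ := by
      intro x hx
      by_cases h : x ∈ Icc (0:ℝ) T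
      · exact Or.inl ⟨h.1, lt_of_le_of_ne h.2 (by simpa using hx)⟩
      · exact Or.inr h
    refine le_antisymm ?_ (zero_le)
    calc α i ω {(T:ℝ)}ᶜ ≤ α i ω (Ico 0 T ∪ (Icc 0 T)ᶜ) := measure_mono hsub
      _ ≤ α i ω (Ico 0 T) + α i ω (Icc 0 T)ᶜ := measure_union_le _ _
      _ = 0 := by rw [hIco, hcomp, add_zero]
  -- the measures Q i
  set Q : ι → Measure Ω := fun i => P.withDensity (fun ω => ENNReal.ofReal (L i ω)) with hQdef
  have hQprob : ∀ i, IsProbabilityMeasure (Q i) := by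
    intro i
    constructor
    rw [hQdef]
    rw [MeasureTheory.withDensity_apply _ MeasurableSet.univ, Measure.restrict_univ,
      ← ofReal_integral_eq_lintegral_ofReal (hLint i) (Eventually.of_forall (hLnn i)),
      hLint1 i, ENNReal.ofReal_one]
  have hQac : ∀ i, Q i ≪ P := fun i => withDensity_absolutelyContinuous _ _
  -- integrals against Q i
  have hQint : ∀ i (g : Ω → ℝ), (∫ ω, g ω ∂(Q i)) = ∫ ω, L i ω * g ω ∂P := by
    intro i g
    have hm : Measurable (fun ω => Real.toNNReal (L i ω)) := (hLmeas i).real_toNNReal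
    have h := integral_withDensity_eq_integral_smul (μ := P) hm g
    have heq : (Q i) = P.withDensity (fun ω => ((Real.toNNReal (L i ω) : NNReal) : ENNReal)) := rfl
    rw [heq, h]
    refine integral_congr_ae (Eventually.of_forall fun ω => ?_)
    simp [NNReal.smul_def, Real.coe_toNNReal _ (hLnn i ω)]
  -- main identity
  have hA : ∀ (X : ℝ → Ω → ℝ) i,
      (∫ ω, (∫ s in Icc 0 T, -(X s ω) ∂(α i ω)) ∂P) = ∫ ω, -(X T ω) ∂(Q i) := by
    intro X i
    rw [hQint i]
    refine integral_congr_ae ?_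
    filter_upwards [key i] with ω hω
    have h1 : (Icc (0:ℝ) T : Set ℝ) =ᵐ[α i ω] ({T} : Set ℝ) := by
      rw [MeasureTheory.ae_eq_set]
      constructor
      · exact measure_mono_null (fun x hx => hx.2) hω
      · have : ({T} : Set ℝ) \ Icc 0 T = (∅ : Set ℝ) := by
          rw [diff_eq_empty]
          exact singleton_subset_iff.mpr ⟨hT.le, le_rfl⟩
        rw [this]; exact measure_empty
    have hTmass : α i ω {(T:ℝ)} = α i ω (Icc 0 T) := by
      refine le_antisymm (measure_mono (singleton_subset_iff.mpr ⟨hT.le, le_rfl⟩)) ?_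
      calc α i ω (Icc 0 T) ≤ α i ω ({T} ∪ {T}ᶜ) := measure_mono (by simp)
        _ ≤ α i ω {T} + α i ω {T}ᶜ := measure_union_le _ _
        _ = α i ω {T} := by rw [hω, add_zero]
    rw [setIntegral_congr_set h1, (α i ω).restrict_singleton, integral_smul_measure,
      integral_dirac, hTmass]
    simp [hLdef, smul_eq_mul, mul_comm]
  -- conclude
  have hrepQ : ∀ X, MemRInf ℱ T X → ρ X = ⨆ i : ι, ((∫ ω, -(X T ω) ∂(Q i)) - γ i) := by
    intro X hX
    rw [hrep X hX]
    exact iSup_congr fun i => by rw [hA X i]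
  refine ⟨ι, ‹Nonempty ι›, Q, γ, hQprob, hQac, hγpos, hrepQ, ?_⟩
  intro X Y hX hY hXY
  rw [hrepQ X hX, hrepQ Y hY]
  simp only [hXY]
end
end

section
/- Let g : ℝ × ℝᵈ → ℝ be convex with |g(y,z)| ≤ C(1 + |y| + |z|²), and let g*(β,μ) = sup_{(y,z)} {−βy − μ·z − g(y,z)}. Then for every (y₀, z₀) there exists (β̄, μ̄) with g*(β̄, μ̄) < ∞ attaining the Fenchel equality g(y₀, z₀) = −β̄ y₀ − μ̄·z₀ − g*(β̄, μ̄), and moreover |μ̄|² ≤ B(1 + |y₀| + |z₀|²) for a constant B depending only on C. -/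
open Set

noncomputable section

lemma exists_subgradient {E : Type*} [AddCommGroup E] [Module ℝ E]
    (f : E → ℝ) (hf : ConvexOn ℝ Set.univ f) (p₀ : E) :
    ∃ L : E →ₗ[ℝ] ℝ, ∀ v : E, L v ≤ f (p₀ + v) - f p₀ := by
  classical
  set q : E → ℝ → ℝ := fun v t => (f (p₀ + t • v) - f p₀) / t with hqdef
  have hconv1 : ∀ v : E, ConvexOn ℝ Set.univ (fun t : ℝ => f (p₀ + t • v)) := by
    intro v
    have h := hf.comp_affineMap (AffineMap.lineMap p₀ (p₀ + v) : ℝ →ᵃ[ℝ] E)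
    have : (fun t : ℝ => f (p₀ + t • v)) =
        (f ∘ (AffineMap.lineMap p₀ (p₀ + v) : ℝ →ᵃ[ℝ] E)) := by
      funext t
      simp [AffineMap.lineMap_apply, add_comm]
    rw [this]
    simpa using h
  have hmono : ∀ (v : E) (s t : ℝ), s ≠ 0 → t ≠ 0 → s ≤ t → q v s ≤ q v t := by
    intro v s t hs ht hst
    have h := (hconv1 v).secant_mono (mem_univ (0:ℝ)) (mem_univ s) (mem_univ t) hs ht hst
    simpa [hqdef] using h
  set S : E → Set ℝ := fun v => q v '' Ioi (0:ℝ) with hSdef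
  have hSne : ∀ v, (S v).Nonempty := fun v => ⟨q v 1, 1, mem_Ioi.mpr one_pos, rfl⟩
  have hbdd : ∀ v, BddBelow (S v) := by
    intro v
    refine ⟨q v (-1), ?_⟩
    rintro x ⟨t, ht, rfl⟩
    exact hmono v (-1) t (by norm_num) (ne_of_gt ht) (by linarith [mem_Ioi.mp ht])
  set N : E → ℝ := fun v => sInf (S v) with hNdef
  have hNle : ∀ (v : E) (t : ℝ), 0 < t → N v ≤ q v t := by
    intro v t ht
    exact csInf_le (hbdd v) ⟨t, ht, rfl⟩
  have hN0 : N 0 = 0 := by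
    have : S 0 = {0} := by
      have : q 0 = fun _ : ℝ => (0:ℝ) := by
        funext t; simp [hqdef]
      rw [hSdef]; simp only [this]
      exact (Set.Nonempty.image_const ⟨1, one_pos⟩ 0)
    rw [hNdef]; simp [this]
  have hhom : ∀ c : ℝ, 0 < c → ∀ v, N (c • v) = c * N v := by
    have key : ∀ c : ℝ, 0 < c → ∀ v, N (c • v) ≤ c * N v := by
      intro c hc v
      have h1 : ∀ u : ℝ, 0 < u → N (c • v) ≤ c * q v u := by
        intro u hu
        have he : q (c • v) (u / c) = c * q v u := by
          have : (u / c) • (c • v) = u • v := by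
            rw [smul_smul, div_mul_cancel₀ _ (ne_of_gt hc)]
          simp only [hqdef, this]
          field_simp
        have := hNle (c • v) (u / c) (div_pos hu hc)
        rw [he] at this; exact this
      have h2 : N (c • v) / c ≤ N v := by
        apply le_csInf (hSne v)
        rintro x ⟨u, hu, rfl⟩
        rw [div_le_iff₀' hc]
        exact h1 u hu
      calc N (c • v) = c * (N (c • v) / c) := by field_simp
        _ ≤ c * N v := by
            exact mul_le_mul_of_nonneg_left h2 (le_of_lt hc)
    intro c hc v
    refine le_antisymm (key c hc v) ?_
    have := key c⁻¹ (inv_pos.mpr hc) (c • v)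
    rw [inv_smul_smul₀ (ne_of_gt hc)] at this
    have := mul_le_mul_of_nonneg_left this (le_of_lt hc)
    calc c * N v ≤ c * (c⁻¹ * N (c • v)) := this
      _ = N (c • v) := by field_simp
  have hadd : ∀ v w, N (v + w) ≤ N v + N w := by
    intro v w
    refine le_of_forall_pos_le_add ?_
    intro ε hε
    obtain ⟨x, ⟨t, ht, rfl⟩, hx⟩ :=
      exists_lt_of_csInf_lt (hSne v) (lt_add_of_pos_right (N v) (half_pos hε))
    obtain ⟨y, ⟨t', ht', rfl⟩, hy⟩ :=
      exists_lt_of_csInf_lt (hSne w) (lt_add_of_pos_right (N w) (half_pos hε))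
    rw [mem_Ioi] at ht ht'
    set u : ℝ := min t t' / 2 with hudef
    have hu : 0 < u := by positivity
    have hkey : q (v + w) u ≤ q v (2 * u) + q w (2 * u) := by
      have hcomb : p₀ + u • (v + w) =
          (1/2 : ℝ) • (p₀ + (2*u) • v) + (1/2 : ℝ) • (p₀ + (2*u) • w) := by
        module
      have hcv := hf.2 (mem_univ (p₀ + (2*u) • v)) (mem_univ (p₀ + (2*u) • w))
        (by norm_num : (0:ℝ) ≤ 1/2) (by norm_num : (0:ℝ) ≤ 1/2) (by norm_num)
      rw [← hcomb] at hcv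
      simp only [smul_eq_mul] at hcv
      simp only [hqdef]
      rw [← add_div, div_le_div_iff₀ hu (by linarith : (0:ℝ) < 2*u)]
      nlinarith [hcv, hu.le, mul_le_mul_of_nonneg_right hcv hu.le]
    have h2u : q v (2 * u) ≤ q v t :=
      hmono v (2*u) t (by positivity) (ne_of_gt ht)
        (by rw [hudef]; have := min_le_left t t'; linarith)
    have h2u' : q w (2 * u) ≤ q w t' :=
      hmono w (2*u) t' (by positivity) (ne_of_gt ht')
        (by rw [hudef]; have := min_le_right t t'; linarith)
    have := hNle (v + w) u hu
    linarith
  have hdom : ∀ x : ((0 : E →ₗ[ℝ] ℝ).toPMap ⊥).domain,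
      ((0 : E →ₗ[ℝ] ℝ).toPMap ⊥) x ≤ N x := by
    rintro ⟨x, hx⟩
    have hx0 : x = 0 := by simpa using hx
    subst hx0
    simp [LinearMap.toPMap, hN0]
  obtain ⟨L, -, hL⟩ := exists_extension_of_le_sublinear
    ((0 : E →ₗ[ℝ] ℝ).toPMap ⊥) N hhom hadd hdom
  refine ⟨L, fun v => ?_⟩
  have h1 := hL v
  have h2 : N v ≤ q v 1 := hNle v 1 one_pos
  have h3 : q v 1 = f (p₀ + v) - f p₀ := by simp [hqdef]
  linarith

set_option maxHeartbeats 1000000 in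
/-- Let `g : ℝ × ℝᵈ → ℝ` be convex with `|g(y,z)| ≤ C(1 + |y| + |z|²)`,
and let `g*(β,μ) = sup_{(y,z)} (−βy − μ·z − g(y,z))`.  There is a constant `B` (depending
only on `C`) such that for every `(y₀,z₀)` there exists `(β̄,μ̄)` with `g*(β̄,μ̄) < ∞`
attaining the Fenchel equality `g(y₀,z₀) = −β̄y₀ − μ̄·z₀ − g*(β̄,μ̄)`, and moreover
`|μ̄|² ≤ B(1 + |y₀| + |z₀|²)`. -/
theorem stmt19 {d : ℕ} (g : ℝ → (Fin d → ℝ) → ℝ) (C : ℝ) (hC : 0 ≤ C)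
    (hgrowth : ∀ y z, |g y z| ≤ C * (1 + |y| + ‖z‖ ^ 2))
    (hconv : ConvexOn ℝ Set.univ fun p : ℝ × (Fin d → ℝ) => g p.1 p.2) :
    ∃ B : ℝ, ∀ (y₀ : ℝ) (z₀ : Fin d → ℝ),
      ∃ (β : ℝ) (μ : Fin d → ℝ),
        BddAbove (Set.range fun p : ℝ × (Fin d → ℝ) =>
          -β * p.1 - (∑ i, μ i * p.2 i) - g p.1 p.2) ∧
        g y₀ z₀ = -β * y₀ - (∑ i, μ i * z₀ i) -
          sSup (Set.range fun p : ℝ × (Fin d → ℝ) =>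
            -β * p.1 - (∑ i, μ i * p.2 i) - g p.1 p.2) ∧
        (∑ i, μ i ^ 2) ≤ B * (1 + |y₀| + ‖z₀‖ ^ 2) := by
  classical
  refine ⟨36 * C ^ 2, fun y₀ z₀ => ?_⟩
  obtain ⟨L, hL⟩ := exists_subgradient (fun p : ℝ × (Fin d → ℝ) => g p.1 p.2) hconv (y₀, z₀)
  set u : ℝ × (Fin d → ℝ) := (1, 0) with hu
  set e : Fin d → ℝ × (Fin d → ℝ) := fun i => (0, Pi.single i 1) with he
  set β : ℝ := -L u with hβ
  set μ : Fin d → ℝ := fun i => -L (e i) with hμ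
  have hlin : ∀ p : ℝ × (Fin d → ℝ), -β * p.1 - (∑ i, μ i * p.2 i) = L p := by
    intro p
    have hp : p = p.1 • u + ∑ i, p.2 i • e i := by
      refine Prod.ext ?_ ?_
      · simp [hu, he, Prod.fst_sum]
      · simp only [Prod.snd_add, Prod.smul_snd, Prod.snd_sum, hu, he, smul_zero, zero_add]
        funext j
        simp [Finset.sum_apply, Pi.single_apply]
    conv_rhs => rw [hp]
    rw [map_add, map_smul, map_sum]
    simp only [map_smul, smul_eq_mul]
    have h1 : ∀ i ∈ Finset.univ, μ i * p.2 i = -(p.2 i * L (e i)) := by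
      intro i _; rw [hμ]; ring
    rw [Finset.sum_congr rfl h1, Finset.sum_neg_distrib, hβ]
    ring
  have hsub : ∀ p : ℝ × (Fin d → ℝ),
      L p - g p.1 p.2 ≤ L (y₀, z₀) - g y₀ z₀ := by
    intro p
    have h := hL (p - (y₀, z₀))
    rw [map_sub] at h
    simp only [add_sub_cancel] at h
    linarith
  set M : ℝ := L (y₀, z₀) - g y₀ z₀ with hM
  have hFub : ∀ p : ℝ × (Fin d → ℝ),
      -β * p.1 - (∑ i, μ i * p.2 i) - g p.1 p.2 ≤ M := by
    intro p; rw [hlin p]; exact hsub p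
  have hbdd : BddAbove (Set.range fun p : ℝ × (Fin d → ℝ) =>
      -β * p.1 - (∑ i, μ i * p.2 i) - g p.1 p.2) := by
    refine ⟨M, ?_⟩
    rintro x ⟨p, rfl⟩
    exact hFub p
  have hsup : sSup (Set.range fun p : ℝ × (Fin d → ℝ) =>
      -β * p.1 - (∑ i, μ i * p.2 i) - g p.1 p.2) = M := by
    refine le_antisymm (csSup_le (Set.range_nonempty _) ?_) ?_
    · rintro x ⟨p, rfl⟩; exact hFub p
    · have h : -β * y₀ - (∑ i, μ i * z₀ i) - g y₀ z₀ = M := by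
        rw [hlin (y₀, z₀)]
      rw [← h]
      exact le_csSup hbdd ⟨(y₀, z₀), rfl⟩
  refine ⟨β, μ, hbdd, ?_, ?_⟩
  · rw [hsup, hlin (y₀, z₀), hM]; ring
  · -- bound on μ
    set s : ℝ := Real.sqrt (1 + |y₀| + ‖z₀‖ ^ 2) with hs
    have harg : (0:ℝ) ≤ 1 + |y₀| + ‖z₀‖ ^ 2 := by positivity
    have hs2 : s ^ 2 = 1 + |y₀| + ‖z₀‖ ^ 2 := Real.sq_sqrt harg
    have hsnn : 0 ≤ s := Real.sqrt_nonneg _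
    have hs1 : 1 ≤ s := by nlinarith [abs_nonneg y₀, sq_nonneg ‖z₀‖]
    have hspos : 0 < s := lt_of_lt_of_le one_pos hs1
    have hz : ‖z₀‖ ≤ s := by
      rw [show ‖z₀‖ = Real.sqrt (‖z₀‖ ^ 2) from (Real.sqrt_sq (norm_nonneg z₀)).symm, hs]
      exact Real.sqrt_le_sqrt (by linarith [abs_nonneg y₀])
    set m2 : ℝ := ∑ i, μ i ^ 2 with hm2
    have hm2nn : 0 ≤ m2 := Finset.sum_nonneg fun i _ => sq_nonneg _
    set m : ℝ := Real.sqrt m2 with hm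
    have hmnn : 0 ≤ m := Real.sqrt_nonneg _
    have hmsq : m ^ 2 = m2 := Real.sq_sqrt hm2nn
    rcases eq_or_lt_of_le hmnn with hm0 | hmpos
    · have h0 : m2 = 0 := by rw [← hmsq, ← hm0]; ring
      rw [h0]; positivity
    · have hμi : ∀ i, |μ i| ≤ m := by
        intro i
        rw [← Real.sqrt_sq_eq_abs, hm]
        exact Real.sqrt_le_sqrt (Finset.single_le_sum
          (fun j _ => sq_nonneg (μ j)) (Finset.mem_univ i))
      have hμnorm : ‖μ‖ ≤ m := by
        rw [pi_norm_le_iff_of_nonneg hmnn]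
        intro i; simpa using hμi i
      have hmne : m ≠ 0 := ne_of_gt hmpos
      set w : Fin d → ℝ := (-(s/m)) • μ with hw
      have hLw : L (0, w) = s * m := by
        rw [← hlin (0, w)]
        have hsum : (∑ i, μ i * w i) = -(s/m) * m2 := by
          rw [hm2, Finset.mul_sum]
          refine Finset.sum_congr rfl fun i _ => ?_
          rw [hw]; simp only [Pi.smul_apply, smul_eq_mul]; ring
        rw [hsum, ← hmsq]
        field_simp
        ring
      have hsubw := hL (0, w)
      have haddw : ((y₀, z₀) : ℝ × (Fin d → ℝ)) + (0, w) = (y₀, z₀ + w) := by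
        simp [Prod.ext_iff]
      rw [haddw, hLw] at hsubw
      have hg1 := hgrowth y₀ (z₀ + w)
      have hg2 := hgrowth y₀ z₀
      have hwnorm : ‖w‖ ≤ s := by
        rw [hw, norm_smul]
        have hns : ‖(-(s/m))‖ = s / m := by
          rw [norm_neg, Real.norm_eq_abs, abs_of_nonneg (by positivity)]
        rw [hns]
        calc s / m * ‖μ‖ ≤ s / m * m :=
              mul_le_mul_of_nonneg_left hμnorm (by positivity)
          _ = s := by field_simp
      have hzw : ‖z₀ + w‖ ≤ 2 * s :=
        le_trans (norm_add_le _ _) (by linarith)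
      have hzw2 : ‖z₀ + w‖ ^ 2 ≤ 4 * s ^ 2 := by
        nlinarith [norm_nonneg (z₀ + w)]
      have hub : s * m ≤ 6 * C * s ^ 2 := by
        have h1 : g y₀ (z₀ + w) ≤ C * (1 + |y₀| + ‖z₀ + w‖ ^ 2) :=
          le_trans (le_abs_self _) hg1
        have h2 : -g y₀ z₀ ≤ C * (1 + |y₀| + ‖z₀‖ ^ 2) :=
          le_trans (neg_le_abs _) hg2
        have hA : 1 + |y₀| + ‖z₀ + w‖ ^ 2 ≤ 5 * s ^ 2 := by
          have := sq_nonneg ‖z₀‖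
          linarith
        have hB2 : C * (1 + |y₀| + ‖z₀ + w‖ ^ 2) ≤ C * (5 * s ^ 2) :=
          mul_le_mul_of_nonneg_left hA hC
        have hB3 : C * (1 + |y₀| + ‖z₀‖ ^ 2) = C * s ^ 2 := by rw [hs2]
        linarith
      have hmle : m ≤ 6 * C * s := by
        by_contra hcon
        push_neg at hcon
        have := mul_lt_mul_of_pos_left hcon hspos
        nlinarith
      have hfin := mul_self_le_mul_self hmnn hmle
      rw [← hmsq]
      nlinarith
end
end
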